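/- arXiv:2104.01170 — 2 statements merged into one kernel-verified Lean document; each statement's English description precedes it below -/
import Mathlib

section
/- Let x, y ∈ ℂ^n be nonzero with Re(x*y) ≥ 0. Then the matrix ℋ = yx*/‖x‖² − xy*/‖x‖² + (y*x) xx*/‖x‖⁴ satisfies ℋx = y, ℋ + ℋ* positive semidefinite, and ‖ℋ‖_F² = 2‖y‖²/‖x‖² − |x*y|²/‖x‖⁴. -/
open Matrix
open scoped ComplexOrder

/-- Squared Frobenius norm of a complex matrix. -/
noncomputable def frobSq {r q : ℕ} (A : Matrix (Fin r) (Fin q) ℂ) : ℝ :=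
  ∑ i, ∑ j, ‖A i j‖ ^ 2

/-- Squared Euclidean norm of a complex vector. -/
noncomputable def nsq {n : ℕ} (x : Fin n → ℂ) : ℝ := ∑ i, ‖x i‖ ^ 2

lemma vmv_mul {n : ℕ} (a b c d : Fin n → ℂ) :
    vecMulVec a b * vecMulVec c d = (b ⬝ᵥ c) • vecMulVec a d := by
  ext i j
  simp [Matrix.mul_apply, vecMulVec, dotProduct, Finset.sum_mul, Finset.mul_sum]
  apply Finset.sum_congr rfl
  intro k _
  ring

lemma vmv_mulVec {n : ℕ} (a b v : Fin n → ℂ) :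
    vecMulVec a b *ᵥ v = (b ⬝ᵥ v) • a := by
  ext i
  simp only [mulVec, vecMulVec, dotProduct, Matrix.of_apply, Pi.smul_apply,
    smul_eq_mul, Finset.sum_mul]
  apply Finset.sum_congr rfl
  intro k _
  ring

lemma vmv_conjT {n : ℕ} (a b : Fin n → ℂ) :
    (vecMulVec a b)ᴴ = vecMulVec (star b) (star a) := by
  ext i j
  simp [vecMulVec, mul_comm]

lemma trace_vmv {n : ℕ} (a b : Fin n → ℂ) :
    (vecMulVec a b).trace = a ⬝ᵥ b := by
  simp [Matrix.trace, Matrix.diag, vecMulVec, dotProduct]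

lemma norm_sq_eq_star_mul (z : ℂ) : ((‖z‖ ^ 2 : ℝ) : ℂ) = star z * z := by
  rw [Complex.star_def, mul_comm, Complex.mul_conj,
    Complex.sq_norm]

lemma frobSq_eq_trace {n : ℕ} (A : Matrix (Fin n) (Fin n) ℂ) :
    frobSq A = (Aᴴ * A).trace.re := by
  simp only [frobSq, Matrix.trace, Matrix.diag, Matrix.mul_apply,
    conjTranspose_apply]
  rw [Finset.sum_comm (γ := Fin n)]
  rw [Complex.re_sum]
  apply Finset.sum_congr rfl
  intro i _
  rw [Complex.re_sum]
  apply Finset.sum_congr rfl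
  intro j _
  calc ‖A j i‖ ^ 2 = (((‖A j i‖ ^ 2 : ℝ) : ℂ)).re := (Complex.ofReal_re _).symm
    _ = (star (A j i) * A j i).re := by rw [norm_sq_eq_star_mul]

lemma nsq_coe {n : ℕ} (x : Fin n → ℂ) : ((nsq x : ℂ)) = star x ⬝ᵥ x := by
  simp only [nsq, dotProduct, Pi.star_apply]
  push_cast
  apply Finset.sum_congr rfl
  intro i _
  rw [← Complex.ofReal_pow]
  exact norm_sq_eq_star_mul (x i)

lemma nsq_pos {n : ℕ} {x : Fin n → ℂ} (hx : x ≠ 0) : 0 < nsq x := by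
  have h : ∃ i, x i ≠ 0 := by
    by_contra h
    push_neg at h
    exact hx (funext h)
  obtain ⟨i, hi⟩ := h
  have h2 : (0:ℝ) < ‖x i‖ := norm_pos_iff.mpr hi
  have h3 : (0:ℝ) < ‖x i‖ ^ 2 := by positivity
  refine lt_of_lt_of_le h3 ?_
  exact Finset.single_le_sum (f := fun i => ‖x i‖ ^ 2) (fun j _ => by positivity)
    (Finset.mem_univ i)

theorem minimal_dissipative_vector_mapping
    {n : ℕ} (x y : Fin n → ℂ) (hx : x ≠ 0) (hy : y ≠ 0)
    (hRe : 0 ≤ ((star x) ⬝ᵥ y).re)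
    (H : Matrix (Fin n) (Fin n) ℂ)
    (hH : H = ((nsq x : ℂ))⁻¹ • (vecMulVec y (star x) - vecMulVec x (star y))
        + (((star y) ⬝ᵥ x) / (nsq x : ℂ) ^ 2) • vecMulVec x (star x)) :
    H *ᵥ x = y ∧ (H + Hᴴ).PosSemidef ∧
      frobSq H = 2 * nsq y / nsq x - ‖(star x) ⬝ᵥ y‖ ^ 2 / (nsq x) ^ 2 := by
  have hc : nsq x ≠ 0 := (nsq_pos hx).ne'
  have hcC : (nsq x : ℂ) ≠ 0 := by exact_mod_cast hc
  set s : ℂ := (star x) ⬝ᵥ y with hs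
  have hsc : (star y) ⬝ᵥ x = starRingEnd ℂ s := by
    rw [hs, star_dotProduct]; simp
  constructor
  · rw [hH]
    rw [add_mulVec, smul_mulVec, sub_mulVec, smul_mulVec,
      vmv_mulVec, vmv_mulVec, vmv_mulVec, ← nsq_coe, hsc]
    ext i
    simp only [Pi.add_apply, Pi.smul_apply, Pi.sub_apply, smul_eq_mul]
    field_simp
    ring
  have hHT : Hᴴ = ((nsq x : ℂ))⁻¹ •
      (vecMulVec x (star y) - vecMulVec y (star x))
      + (s / (nsq x : ℂ) ^ 2) • vecMulVec x (star x) := by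
    rw [hH, conjTranspose_add, conjTranspose_smul, conjTranspose_smul,
      conjTranspose_sub, vmv_conjT, vmv_conjT, vmv_conjT]
    simp only [star_star, hsc]
    ext i j
    simp only [Matrix.add_apply, Matrix.smul_apply, Matrix.sub_apply,
      vecMulVec_apply, smul_eq_mul, Pi.star_apply, Complex.star_def,
      map_inv₀, map_div₀, map_pow, Complex.conj_ofReal,
      RingHomCompTriple.comp_apply, RingHom.id_apply, RingHom.coe_comp,
      Function.comp_apply, starRingEnd_self_apply]
    try ring
  refine ⟨?_, ?_⟩
  · have hHadd : H + Hᴴ = ((s + starRingEnd ℂ s) / (nsq x : ℂ) ^ 2) •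
        vecMulVec x (star x) := by
      rw [hHT, hH]
      ext i j
      simp only [Matrix.add_apply, Matrix.smul_apply, Matrix.sub_apply,
        vecMulVec_apply, smul_eq_mul, Pi.star_apply, hsc]
      ring
    rw [hHadd]
    have hre : s + starRingEnd ℂ s = ((2 * s.re : ℝ) : ℂ) := by
      rw [Complex.add_conj]
    rw [Matrix.posSemidef_iff_dotProduct_mulVec]
    constructor
    · rw [Matrix.IsHermitian, conjTranspose_smul, vmv_conjT, star_star]
      congr 1
      rw [hre]
      simp [Complex.star_def, map_div₀, Complex.conj_ofReal]
    · intro v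
      rw [smul_mulVec, vmv_mulVec, dotProduct_smul, dotProduct_smul]
      have h1 : star v ⬝ᵥ x = starRingEnd ℂ (star x ⬝ᵥ v) := by
        rw [star_dotProduct]; simp
      rw [smul_eq_mul, smul_eq_mul, h1, Complex.mul_conj, hre]
      rw [← Complex.ofReal_pow, ← Complex.ofReal_div, ← Complex.ofReal_mul,
        Complex.zero_le_real]
      have h2 : (0:ℝ) ≤ 2 * s.re := by linarith
      exact mul_nonneg (div_nonneg h2 (by positivity)) (Complex.normSq_nonneg _)
  · rw [frobSq_eq_trace]
    have key : (Hᴴ * H).trace =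
        ((2 * nsq y / nsq x - ‖s‖ ^ 2 / (nsq x) ^ 2 : ℝ) : ℂ) := by
      rw [hHT, hH]
      simp only [Matrix.add_mul, Matrix.mul_add, Matrix.smul_mul,
        Matrix.mul_smul, Matrix.sub_mul, Matrix.mul_sub, vmv_mul]
      have hxx : x ⬝ᵥ star x = (nsq x : ℂ) := by
        rw [dotProduct_comm]; exact (nsq_coe x).symm
      have hyy : y ⬝ᵥ star y = (nsq y : ℂ) := by
        rw [dotProduct_comm]; exact (nsq_coe y).symm
      have hyx : y ⬝ᵥ star x = s := by rw [dotProduct_comm]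
      have hxy : x ⬝ᵥ star y = starRingEnd ℂ s := by rw [dotProduct_comm, hsc]
      have hxx2 : star x ⬝ᵥ x = (nsq x : ℂ) := (nsq_coe x).symm
      have hyy2 : star y ⬝ᵥ y = (nsq y : ℂ) := (nsq_coe y).symm
      simp only [trace_add, trace_sub, trace_smul, trace_vmv,
        hxx, hyy, hyx, hxy, hxx2, hyy2, hsc, ← hs, smul_eq_mul]
      have hnorm : ((‖s‖ ^ 2 : ℝ) : ℂ) = s * starRingEnd ℂ s := by
        rw [norm_sq_eq_star_mul, Complex.star_def, mul_comm]
      push_cast [hnorm]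
      field_simp
      ring
    rw [key, Complex.ofReal_re]
end

section
/- Let R be an n×n Hermitian matrix partitioned as R = [[B, C*], [C, D]] with B of size s×s (0 < s < n). Then R is positive semidefinite if and only if: (1) B is positive semidefinite, (2) null(B) ⊆ null(C), and (3) D − C B† C* is positive semidefinite, where B† is the Moore–Penrose pseudoinverse of B. -/
open Matrix
open scoped ComplexOrder

/-- `Xd` is the Moore–Penrose pseudoinverse of `X` (the four Penrose conditions). -/
def IsMoorePenroseInv {m n : Type*} [Fintype m] [Fintype n]
    (X : Matrix m n ℂ) (Xd : Matrix n m ℂ) : Prop :=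
  X * Xd * X = X ∧ Xd * X * Xd = Xd ∧ (X * Xd)ᴴ = X * Xd ∧ (Xd * X)ᴴ = Xd * X

lemma mp_unique {m n : Type*} [Fintype m] [Fintype n] {X : Matrix m n ℂ}
    {Y Z : Matrix n m ℂ} (hY : IsMoorePenroseInv X Y) (hZ : IsMoorePenroseInv X Z) :
    Y = Z := by
  obtain ⟨hY1, hY2, hY3, hY4⟩ := hY
  obtain ⟨hZ1, hZ2, hZ3, hZ4⟩ := hZ
  have hXZ : Xᴴ * Zᴴ * Xᴴ = Xᴴ := by
    rw [← conjTranspose_mul, ← conjTranspose_mul, ← Matrix.mul_assoc, hZ1]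
  have hXY : Xᴴ * Yᴴ * Xᴴ = Xᴴ := by
    rw [← conjTranspose_mul, ← conjTranspose_mul, ← Matrix.mul_assoc, hY1]
  have e1 : Y = Y * X * Z := by
    calc Y = Y * X * Y := hY2.symm
    _ = Y * (Yᴴ * Xᴴ) := by rw [Matrix.mul_assoc, ← hY3, conjTranspose_mul]
    _ = Y * (Yᴴ * (Xᴴ * Zᴴ * Xᴴ)) := by rw [hXZ]
    _ = Y * (X * Y)ᴴ * (X * Z)ᴴ := by
      simp only [conjTranspose_mul, Matrix.mul_assoc]
    _ = Y * (X * Y) * (X * Z) := by rw [hY3, hZ3]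
    _ = Y * X * Y * (X * Z) := by rw [Matrix.mul_assoc Y X Y]
    _ = Y * (X * Z) := by rw [hY2]
    _ = Y * X * Z := (Matrix.mul_assoc Y X Z).symm
  have e2 : Z = Y * X * Z := by
    calc Z = Z * X * Z := hZ2.symm
    _ = (Z * X)ᴴ * Z := by rw [hZ4]
    _ = Xᴴ * Zᴴ * Z := by rw [conjTranspose_mul]
    _ = Xᴴ * Yᴴ * Xᴴ * Zᴴ * Z := by rw [hXY]
    _ = (Y * X)ᴴ * ((Z * X)ᴴ * Z) := by
      simp only [conjTranspose_mul, Matrix.mul_assoc]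
    _ = Y * X * (Z * X * Z) := by rw [hY4, hZ4, Matrix.mul_assoc]
    _ = Y * X * Z := by rw [hZ2]
  exact e1.trans e2.symm

lemma schur_expand {s t : Type*} [Fintype s] [Fintype t]
    (B : Matrix s s ℂ) (C : Matrix t s ℂ) (D : Matrix t t ℂ) (Bd : Matrix s s ℂ)
    (h1 : B * Bd * Cᴴ = Cᴴ) (h2 : C * Bd * B = C) (hBdH : Bdᴴ = Bd)
    (x : s → ℂ) (y : t → ℂ) :
    star (Sum.elim x y) ⬝ᵥ (fromBlocks B Cᴴ C D *ᵥ Sum.elim x y) =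
      star (x + (Bd * Cᴴ) *ᵥ y) ⬝ᵥ (B *ᵥ (x + (Bd * Cᴴ) *ᵥ y)) +
        star y ⬝ᵥ ((D - C * Bd * Cᴴ) *ᵥ y) := by
  have h3 : C * Bd * B * Bd * Cᴴ = C * Bd * Cᴴ := by rw [h2]
  simp only [Function.star_sumElim, fromBlocks_mulVec, sumElim_dotProduct_sumElim,
    star_add, star_mulVec, conjTranspose_mul, conjTranspose_conjTranspose, hBdH,
    add_dotProduct, dotProduct_add, mulVec_add, sub_mulVec, dotProduct_sub,
    dotProduct_mulVec, vecMul_vecMul, mulVec_mulVec, add_vecMul,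
    Sum.elim_comp_inl, Sum.elim_comp_inr, ← Matrix.mul_assoc, add_dotProduct,
    h1, h2, h3]
  abel

theorem posSemidef_blocks_iff_schur
    {s t : ℕ} (hs : 0 < s) (ht : 0 < t)
    (B : Matrix (Fin s) (Fin s) ℂ) (C : Matrix (Fin t) (Fin s) ℂ)
    (D : Matrix (Fin t) (Fin t) ℂ)
    (hB : B.IsHermitian) (hD : D.IsHermitian)
    (Bd : Matrix (Fin s) (Fin s) ℂ) (hBd : IsMoorePenroseInv B Bd) :
    (fromBlocks B Cᴴ C D).PosSemidef ↔
      (B.PosSemidef ∧ (∀ v : Fin s → ℂ, B *ᵥ v = 0 → C *ᵥ v = 0) ∧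
        (D - C * Bd * Cᴴ).PosSemidef) := by
  obtain ⟨p1, p2, p3, p4⟩ := hBd
  -- Bd is Hermitian
  have hBdH : Bdᴴ = Bd := by
    refine mp_unique (X := B) ?_ ⟨p1, p2, p3, p4⟩
    refine ⟨?_, ?_, ?_, ?_⟩
    · calc B * Bdᴴ * B = (Bᴴ * Bd * Bᴴ)ᴴ := by
            simp only [conjTranspose_mul, conjTranspose_conjTranspose, Matrix.mul_assoc]
      _ = B := by rw [hB.eq, p1, hB.eq]
    · calc Bdᴴ * B * Bdᴴ = (Bd * Bᴴ * Bd)ᴴ := by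
            simp only [conjTranspose_mul, conjTranspose_conjTranspose, Matrix.mul_assoc]
      _ = Bdᴴ := by rw [hB.eq, p2]
    · calc (B * Bdᴴ)ᴴ = Bd * Bᴴ := by rw [conjTranspose_mul, conjTranspose_conjTranspose]
      _ = Bd * B := by rw [hB.eq]
      _ = (Bd * B)ᴴ := p4.symm
      _ = Bᴴ * Bdᴴ := by rw [conjTranspose_mul]
      _ = B * Bdᴴ := by rw [hB.eq]
    · calc (Bdᴴ * B)ᴴ = Bᴴ * Bd := by rw [conjTranspose_mul, conjTranspose_conjTranspose]
      _ = B * Bd := by rw [hB.eq]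
      _ = (B * Bd)ᴴ := p3.symm
      _ = Bdᴴ * Bᴴ := by rw [conjTranspose_mul]
      _ = Bdᴴ * B := by rw [hB.eq]
  -- the null hypothesis gives the two key identities
  have mk2 : (∀ v : Fin s → ℂ, B *ᵥ v = 0 → C *ᵥ v = 0) → C * Bd * B = C := by
    intro hnull
    have hker : ∀ v, C *ᵥ (v - (Bd * B) *ᵥ v) = 0 := by
      intro v
      apply hnull
      rw [mulVec_sub, mulVec_mulVec, ← Matrix.mul_assoc, p1, sub_self]
    ext i j
    have := congrFun (hker (Pi.single j 1)) i
    simp only [mulVec_sub, mulVec_mulVec, mulVec_single_one, mul_one, Pi.sub_apply,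
      Pi.zero_apply, sub_eq_zero] at this
    rw [Matrix.mul_assoc]
    exact this.symm
  have mk1 : C * Bd * B = C → B * Bd * Cᴴ = Cᴴ := by
    intro h2
    have := congrArg conjTranspose h2
    simp only [conjTranspose_mul, hB.eq, hBdH, Matrix.mul_assoc] at this
    rw [Matrix.mul_assoc]
    exact this
  constructor
  · rintro h
    obtain ⟨A, hA⟩ : ∃ A : Matrix (Fin s ⊕ Fin t) (Fin s ⊕ Fin t) ℂ, fromBlocks B Cᴴ C D = Aᴴ * A := by
      open scoped MatrixOrder Matrix.Norms.L2Operator in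
      obtain ⟨A, hA⟩ := CStarAlgebra.nonneg_iff_eq_star_mul_self.mp h.nonneg
      exact ⟨A, hA⟩
    set A₁ : Matrix (Fin s ⊕ Fin t) (Fin s) ℂ := A.submatrix id Sum.inl with hA₁
    set A₂ : Matrix (Fin s ⊕ Fin t) (Fin t) ℂ := A.submatrix id Sum.inr with hA₂
    have hBdec : B = A₁ᴴ * A₁ := by
      ext i j
      have := Matrix.ext_iff.2 hA (Sum.inl i) (Sum.inl j)
      simpa [Matrix.mul_apply, conjTranspose_apply, hA₁, submatrix_apply] using this
    have hCdec : C = A₂ᴴ * A₁ := by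
      ext i j
      have := Matrix.ext_iff.2 hA (Sum.inr i) (Sum.inl j)
      simpa [Matrix.mul_apply, conjTranspose_apply, hA₁, hA₂, submatrix_apply] using this
    have hnull : ∀ v : Fin s → ℂ, B *ᵥ v = 0 → C *ᵥ v = 0 := by
      intro v hv
      have h0 : A₁ *ᵥ v = 0 := by
        rw [← dotProduct_star_self_eq_zero (v := A₁ *ᵥ v)]
        have : star v ⬝ᵥ (B *ᵥ v) = 0 := by rw [hv, dotProduct_zero]
        rw [hBdec] at this
        simpa [star_mulVec, dotProduct_mulVec, vecMul_vecMul] using this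
      rw [hCdec, ← mulVec_mulVec, h0, mulVec_zero]
    have h2 := mk2 hnull
    have h1 := mk1 h2
    have hBPS : B.PosSemidef := by
      rw [hBdec]; exact posSemidef_conjTranspose_mul_self A₁
    refine ⟨hBPS, hnull, PosSemidef.of_dotProduct_mulVec_nonneg ?_ ?_⟩
    · have hh : (Cᴴᴴ * Bd * Cᴴ).IsHermitian := isHermitian_conjTranspose_mul_mul Cᴴ hBdH
      rw [conjTranspose_conjTranspose] at hh
      exact hD.sub hh
    · intro y
      have hineq := h.dotProduct_mulVec_nonneg (Sum.elim (-((Bd * Cᴴ) *ᵥ y)) y)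
      rw [schur_expand B C D Bd h1 h2 hBdH] at hineq
      simpa using hineq
  · rintro ⟨hBPS, hnull, hS⟩
    have h2 := mk2 hnull
    have h1 := mk1 h2
    refine PosSemidef.of_dotProduct_mulVec_nonneg (isHermitian_fromBlocks_iff.mpr ⟨hB, conjTranspose_conjTranspose C, rfl, hD⟩)
      (fun z => ?_)
    have := schur_expand B C D Bd h1 h2 hBdH (z ∘ Sum.inl) (z ∘ Sum.inr)
    rw [Sum.elim_comp_inl_inr] at this
    rw [this]
    exact add_nonneg (hBPS.dotProduct_mulVec_nonneg _) (hS.dotProduct_mulVec_nonneg _)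
end
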